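/- The 2-abelian complexity of the Thue–Morse word is a concatenation of palindromes of increasing length: for every q ≥ 1 and every i with 0 ≤ i ≤ 2^{q−1}, P(2^q + 1 + i) = P(2^{q+1} + 1 − i); i.e., the finite sequence P(2^q+1), P(2^q+2), …, P(2^{q+1}+1) is a palindrome. -/

import Mathlib

/-- The Thue–Morse sequence: sum of binary digits of `n`, mod 2. -/
def tm (n : ℕ) : Fin 2 := (Fin.ofNat 2 (Nat.digits 2 n).sum)

/-- The factor of the Thue–Morse word of length `n` starting at position `i`. -/
def tmWord (i n : ℕ) : List (Fin 2) := (List.range n).map (fun j => tm (i + j))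

/-- A binary word is a factor of the Thue–Morse word. -/
def IsFactor (w : List (Fin 2)) : Prop := ∃ i : ℕ, w = tmWord i w.length

/-- Number of occurrences of the word `x` as a factor of `u`. -/
def occCount (u x : List (Fin 2)) : ℕ :=
  ((List.range u.length).filter (fun i => (u.drop i).take x.length = x)).length

/-- Two binary words (of equal length) are 2-abelian equivalent: same first letter,
same last letter, and the same number of occurrences of every word of length 2. -/
def TwoAbelianEquiv (u v : List (Fin 2)) : Prop :=
  u.length = v.length ∧ u.take 1 = v.take 1 ∧
  u.drop (u.length - 1) = v.drop (v.length - 1) ∧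
  ∀ x : List (Fin 2), x.length = 2 → occCount u x = occCount v x

/-- `P n` is the 2-abelian complexity of the Thue–Morse word: the number of
2-abelian equivalence classes of factors of length `n`. -/
noncomputable def P (n : ℕ) : ℕ :=
  Nat.card (Quot (fun u v : {w : List (Fin 2) // w.length = n ∧ IsFactor w} =>
    TwoAbelianEquiv u.1 v.1))

/-- `pword w` counts the pairs in `w`: the total number of occurrences of `00` and `11`. -/
def pword (w : List (Fin 2)) : ℕ := occCount w [0, 0] + occCount w [1, 1]

/-- The set of possible pair counts of Thue–Morse factors of length `n`. -/
def pairs (n : ℕ) : Set ℕ :=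
  { m | ∃ w : List (Fin 2), w.length = n ∧ IsFactor w ∧ pword w = m }

/-- The set of possible pair counts of Thue–Morse factors of length `n`
occurring at some odd position (pure odd factors). -/
def PAIRS (n : ℕ) : Set ℕ := { m | ∃ i : ℕ, i % 2 = 1 ∧ pword (tmWord i n) = m }

namespace TMPal


lemma tm_zero : tm 0 = 0 := by simp [tm]

lemma tm_rec (n : ℕ) (hn : 0 < n) : tm n = (Fin.ofNat 2 (n % 2) + tm (n / 2) : Fin 2) := by
  unfold tm
  rw [Nat.digits_def' (by norm_num : 1 < 2) hn, List.sum_cons]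
  ext; simp only [Fin.val_add, Fin.val_ofNat]; omega

lemma tm_two_mul (i : ℕ) : tm (2 * i) = tm i := by
  rcases Nat.eq_zero_or_pos i with rfl | hi
  · rfl
  · rw [tm_rec (2 * i) (by omega)]
    simp [Nat.mul_div_cancel_left _ (by norm_num : 0 < 2), Nat.mul_mod_right]

lemma tm_two_mul_add_one (i : ℕ) : tm (2 * i + 1) = 1 + tm i := by
  rw [tm_rec (2 * i + 1) (by omega)]
  have h1 : (2 * i + 1) % 2 = 1 := by omega
  have h2 : (2 * i + 1) / 2 = i := by omega
  rw [h1, h2]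
  norm_num
  rfl

lemma tm_one : tm 1 = 1 := by
  have h := tm_two_mul_add_one 0
  norm_num [tm_zero] at h
  exact h

lemma tm_pow_add (B j : ℕ) (h : j < 2 ^ B) : tm (2 ^ B + j) = 1 + tm j := by
  induction B generalizing j with
  | zero =>
    interval_cases j
    show tm 1 = 1 + tm 0
    rw [tm_one, tm_zero]
    decide
  | succ B ih =>
    rcases Nat.even_or_odd j with ⟨i, hi⟩ | ⟨i, hi⟩
    · have hj : 2 ^ (B+1) + j = 2 * (2 ^ B + i) := by subst hi; ring
      rw [hj, tm_two_mul, ih i (by omega), hi, show i + i = 2 * i by ring, tm_two_mul]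
    · have hj : 2 ^ (B+1) + j = 2 * (2 ^ B + i) + 1 := by subst hi; ring
      rw [hj, tm_two_mul_add_one, ih i (by omega), hi, tm_two_mul_add_one]

-- small values
lemma tm_two : tm 2 = 1 := by have h := tm_two_mul 1; norm_num [tm_one] at h; exact h
lemma tm_three : tm 3 = 0 := by
  have h := tm_two_mul_add_one 1; norm_num [tm_one] at h; exact h
lemma tm_five : tm 5 = 0 := by
  have h := tm_two_mul_add_one 2; norm_num [tm_two] at h; exact h
lemma tm_six : tm 6 = 0 := by have h := tm_two_mul 3; norm_num [tm_three] at h; exact h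



/-- occurrences of the pattern `xy` among adjacent pairs in the window `[j, j+n)`. -/
def cnt (x y : Fin 2) (j n : ℕ) : ℕ :=
  ((Finset.range (n-1)).filter (fun k => tm (j+k) = x ∧ tm (j+k+1) = y)).card

def zf (i m : ℕ) : ℕ := ((Finset.range m).filter (fun k => tm (i+k) = 0)).card
def onef (i m : ℕ) : ℕ := ((Finset.range m).filter (fun k => tm (i+k) = 1)).card
def zl (i m : ℕ) : ℕ := ((Finset.range m).filter (fun k => tm (i+k+1) = 0)).card
def onel (i m : ℕ) : ℕ := ((Finset.range m).filter (fun k => tm (i+k+1) = 1)).card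

lemma fin2_eq_one_iff : ∀ u : Fin 2, u = 1 ↔ ¬ (u = 0) := by decide

lemma card_split_double (m : ℕ) (p : ℕ → Prop) [DecidablePred p] :
    ((Finset.range (2*m)).filter p).card
      = ((Finset.range m).filter (fun r => p (2*r))).card
        + ((Finset.range m).filter (fun r => p (2*r+1))).card := by
  induction m with
  | zero => simp
  | succ m ih =>
    simp only [Finset.card_filter] at ih ⊢
    rw [show 2*(m+1) = (2*m)+1+1 by ring, Finset.sum_range_succ, Finset.sum_range_succ,
        Finset.sum_range_succ (fun r => if p (2*r) then 1 else 0) m,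
        Finset.sum_range_succ (fun r => if p (2*r+1) then 1 else 0) m]
    omega

lemma card_split_double_odd (m : ℕ) (p : ℕ → Prop) [DecidablePred p] :
    ((Finset.range (2*m+1)).filter p).card
      = ((Finset.range (m+1)).filter (fun r => p (2*r))).card
        + ((Finset.range m).filter (fun r => p (2*r+1))).card := by
  have h := card_split_double m p
  simp only [Finset.card_filter] at h ⊢
  rw [Finset.sum_range_succ, Finset.sum_range_succ (fun r => if p (2*r) then 1 else 0) m]
  omega

lemma fin2_split_left (s : Finset ℕ) (f : ℕ → Fin 2) (B : ℕ → Prop) [DecidablePred B] :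
    (s.filter (fun k => f k = 0 ∧ B k)).card + (s.filter (fun k => f k = 1 ∧ B k)).card
      = (s.filter B).card := by
  have h0 : (s.filter (fun k => f k = 0 ∧ B k)) = (s.filter B).filter (fun k => f k = 0) := by
    rw [Finset.filter_filter]
    exact Finset.filter_congr (fun k _ => by tauto)
  have h1 : (s.filter (fun k => f k = 1 ∧ B k)) = (s.filter B).filter (fun k => ¬ (f k = 0)) := by
    rw [Finset.filter_filter]
    refine Finset.filter_congr (fun k _ => ?_)
    have := fin2_eq_one_iff (f k)
    tauto
  rw [h0, h1, Finset.card_filter_add_card_filter_not]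

lemma fin2_split_right (s : Finset ℕ) (f : ℕ → Fin 2) (A : ℕ → Prop) [DecidablePred A] :
    (s.filter (fun k => A k ∧ f k = 0)).card + (s.filter (fun k => A k ∧ f k = 1)).card
      = (s.filter A).card := by
  have h0 : (s.filter (fun k => A k ∧ f k = 0)) = (s.filter (fun k => f k = 0 ∧ A k)) :=
    Finset.filter_congr (fun k _ => by tauto)
  have h1 : (s.filter (fun k => A k ∧ f k = 1)) = (s.filter (fun k => f k = 1 ∧ A k)) :=
    Finset.filter_congr (fun k _ => by tauto)
  rw [h0, h1, fin2_split_left]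

lemma zf_add_onef (i m : ℕ) : zf i m + onef i m = m := by
  unfold zf onef
  have h1 : (Finset.range m).filter (fun k => tm (i+k) = 1)
      = (Finset.range m).filter (fun k => ¬ (tm (i+k) = 0)) :=
    Finset.filter_congr (fun k _ => fin2_eq_one_iff (tm (i+k)))
  rw [h1, Finset.card_filter_add_card_filter_not, Finset.card_range]

lemma zl_add_onel (i m : ℕ) : zl i m + onel i m = m := by
  unfold zl onel
  have h1 : (Finset.range m).filter (fun k => tm (i+k+1) = 1)
      = (Finset.range m).filter (fun k => ¬ (tm (i+k+1) = 0)) :=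
    Finset.filter_congr (fun k _ => fin2_eq_one_iff (tm (i+k+1)))
  rw [h1, Finset.card_filter_add_card_filter_not, Finset.card_range]

-- window-boundary recursions
lemma zf_succ (i m : ℕ) : zf i (m+1) = zf i m + (if tm (i+m) = 0 then 1 else 0) := by
  unfold zf
  rw [Finset.card_filter, Finset.sum_range_succ, ← Finset.card_filter]

lemma onef_succ (i m : ℕ) : onef i (m+1) = onef i m + (if tm (i+m) = 1 then 1 else 0) := by
  unfold onef
  rw [Finset.card_filter, Finset.sum_range_succ, ← Finset.card_filter]

lemma zl_succ (i m : ℕ) : zl i (m+1) = zl i m + (if tm (i+m+1) = 0 then 1 else 0) := by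
  unfold zl
  rw [Finset.card_filter, Finset.sum_range_succ, ← Finset.card_filter]

lemma onel_succ (i m : ℕ) : onel i (m+1) = onel i m + (if tm (i+m+1) = 1 then 1 else 0) := by
  unfold onel
  rw [Finset.card_filter, Finset.sum_range_succ, ← Finset.card_filter]

-- letters-to-adjacency identities, for the window [i, i+m+1) (m adjacencies)
lemma Zf_eq (i m : ℕ) : cnt 0 0 i (m+1) + cnt 0 1 i (m+1) = zf i m := by
  unfold cnt zf
  simp only [Nat.add_sub_cancel]
  exact fin2_split_right _ (fun k => tm (i+k+1)) _

lemma Of_eq (i m : ℕ) : cnt 1 0 i (m+1) + cnt 1 1 i (m+1) = onef i m := by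
  unfold cnt onef
  simp only [Nat.add_sub_cancel]
  exact fin2_split_right _ (fun k => tm (i+k+1)) _

lemma Zl_eq (i m : ℕ) : cnt 0 0 i (m+1) + cnt 1 0 i (m+1) = zl i m := by
  unfold cnt zl
  simp only [Nat.add_sub_cancel]
  exact fin2_split_left _ (fun k => tm (i+k)) _

lemma Ol_eq (i m : ℕ) : cnt 0 1 i (m+1) + cnt 1 1 i (m+1) = onel i m := by
  unfold cnt onel
  simp only [Nat.add_sub_cancel]
  exact fin2_split_left _ (fun k => tm (i+k)) _

lemma s1 (i r : ℕ) : tm (2*i + 2*r) = tm (i+r) := by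
  rw [show 2*i+2*r = 2*(i+r) by ring, tm_two_mul]
lemma s2 (i r : ℕ) : tm (2*i + 2*r + 1) = 1 + tm (i+r) := by
  rw [show 2*i+2*r = 2*(i+r) by ring, tm_two_mul_add_one]
lemma s3 (i r : ℕ) : tm (2*i + (2*r+1)) = 1 + tm (i+r) := by
  rw [show 2*i+(2*r+1) = 2*(i+r)+1 by ring, tm_two_mul_add_one]
lemma s4 (i r : ℕ) : tm (2*i + (2*r+1) + 1) = tm (i+r+1) := by
  rw [show 2*i+(2*r+1)+1 = 2*(i+r+1) by ring, tm_two_mul]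
lemma s5 (i r : ℕ) : tm (2*i+1 + 2*r) = 1 + tm (i+r) := by
  rw [show 2*i+1+2*r = 2*(i+r)+1 by ring, tm_two_mul_add_one]
lemma s6 (i r : ℕ) : tm (2*i+1 + 2*r + 1) = tm (i+r+1) := by
  rw [show 2*i+1+2*r+1 = 2*(i+r+1) by ring, tm_two_mul]
lemma s7 (i r : ℕ) : tm (2*i+1 + (2*r+1)) = tm (i+r+1) := by
  rw [show 2*i+1+(2*r+1) = 2*(i+r+1) by ring, tm_two_mul]
lemma s8 (i r : ℕ) : tm (2*i+1 + (2*r+1) + 1) = 1 + tm (i+r+1) := by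
  rw [show 2*i+1+(2*r+1)+1 = 2*(i+r+1)+1 by ring, tm_two_mul_add_one]

lemma C1 (i m : ℕ) : cnt 0 0 (2*i) (2*m+1) = cnt 1 0 i (m+1) := by
  unfold cnt
  try unfold zf
  try unfold onef
  try unfold zl
  try unfold onel
  rw [show 2*m+1-1 = 2*m by omega]
  try rw [show m+1-1 = m by omega]
  try rw [show m+2-1 = m+1 by omega]
  rw [card_split_double m (fun k => tm (2*i+k) = 0 ∧ tm (2*i+k+1) = 0)]
  have hEv : ((Finset.range m).filter (fun r => tm (2*i+2*r) = 0 ∧ tm (2*i+2*r+1) = 0))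
      = ((Finset.range m).filter (fun _ => False)) :=
    Finset.filter_congr (fun r _ => by rw [s1, s2]; generalize tm (i+r) = u; revert u; decide)
  have hOd : ((Finset.range m).filter (fun r => tm (2*i+(2*r+1)) = 0 ∧ tm (2*i+(2*r+1)+1) = 0))
      = ((Finset.range m).filter (fun k => tm (i+k) = 1 ∧ tm (i+k+1) = 0)) :=
    Finset.filter_congr (fun r _ => by rw [s3, s4]; generalize tm (i+r+1) = v; generalize tm (i+r) = u; revert u v; decide)
  rw [hEv, hOd]
  try simp

lemma C2 (i m : ℕ) : cnt 1 1 (2*i) (2*m+1) = cnt 0 1 i (m+1) := by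
  unfold cnt
  try unfold zf
  try unfold onef
  try unfold zl
  try unfold onel
  rw [show 2*m+1-1 = 2*m by omega]
  try rw [show m+1-1 = m by omega]
  try rw [show m+2-1 = m+1 by omega]
  rw [card_split_double m (fun k => tm (2*i+k) = 1 ∧ tm (2*i+k+1) = 1)]
  have hEv : ((Finset.range m).filter (fun r => tm (2*i+2*r) = 1 ∧ tm (2*i+2*r+1) = 1))
      = ((Finset.range m).filter (fun _ => False)) :=
    Finset.filter_congr (fun r _ => by rw [s1, s2]; generalize tm (i+r) = u; revert u; decide)
  have hOd : ((Finset.range m).filter (fun r => tm (2*i+(2*r+1)) = 1 ∧ tm (2*i+(2*r+1)+1) = 1))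
      = ((Finset.range m).filter (fun k => tm (i+k) = 0 ∧ tm (i+k+1) = 1)) :=
    Finset.filter_congr (fun r _ => by rw [s3, s4]; generalize tm (i+r+1) = v; generalize tm (i+r) = u; revert u v; decide)
  rw [hEv, hOd]
  try simp

lemma C3 (i m : ℕ) : cnt 0 1 (2*i) (2*m+1) = zf i m + cnt 1 1 i (m+1) := by
  unfold cnt
  try unfold zf
  try unfold onef
  try unfold zl
  try unfold onel
  rw [show 2*m+1-1 = 2*m by omega]
  try rw [show m+1-1 = m by omega]
  try rw [show m+2-1 = m+1 by omega]
  rw [card_split_double m (fun k => tm (2*i+k) = 0 ∧ tm (2*i+k+1) = 1)]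
  have hEv : ((Finset.range m).filter (fun r => tm (2*i+2*r) = 0 ∧ tm (2*i+2*r+1) = 1))
      = ((Finset.range m).filter (fun k => tm (i+k) = 0)) :=
    Finset.filter_congr (fun r _ => by rw [s1, s2]; generalize tm (i+r) = u; revert u; decide)
  have hOd : ((Finset.range m).filter (fun r => tm (2*i+(2*r+1)) = 0 ∧ tm (2*i+(2*r+1)+1) = 1))
      = ((Finset.range m).filter (fun k => tm (i+k) = 1 ∧ tm (i+k+1) = 1)) :=
    Finset.filter_congr (fun r _ => by rw [s3, s4]; generalize tm (i+r+1) = v; generalize tm (i+r) = u; revert u v; decide)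
  rw [hEv, hOd]
  try simp

lemma C4 (i m : ℕ) : cnt 1 0 (2*i) (2*m+1) = onef i m + cnt 0 0 i (m+1) := by
  unfold cnt
  try unfold zf
  try unfold onef
  try unfold zl
  try unfold onel
  rw [show 2*m+1-1 = 2*m by omega]
  try rw [show m+1-1 = m by omega]
  try rw [show m+2-1 = m+1 by omega]
  rw [card_split_double m (fun k => tm (2*i+k) = 1 ∧ tm (2*i+k+1) = 0)]
  have hEv : ((Finset.range m).filter (fun r => tm (2*i+2*r) = 1 ∧ tm (2*i+2*r+1) = 0))
      = ((Finset.range m).filter (fun k => tm (i+k) = 1)) :=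
    Finset.filter_congr (fun r _ => by rw [s1, s2]; generalize tm (i+r) = u; revert u; decide)
  have hOd : ((Finset.range m).filter (fun r => tm (2*i+(2*r+1)) = 1 ∧ tm (2*i+(2*r+1)+1) = 0))
      = ((Finset.range m).filter (fun k => tm (i+k) = 0 ∧ tm (i+k+1) = 0)) :=
    Finset.filter_congr (fun r _ => by rw [s3, s4]; generalize tm (i+r+1) = v; generalize tm (i+r) = u; revert u v; decide)
  rw [hEv, hOd]
  try simp

lemma C5 (i m : ℕ) : cnt 0 0 (2*i+1) (2*m+1) = cnt 1 0 i (m+1) := by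
  unfold cnt
  try unfold zf
  try unfold onef
  try unfold zl
  try unfold onel
  rw [show 2*m+1-1 = 2*m by omega]
  try rw [show m+1-1 = m by omega]
  try rw [show m+2-1 = m+1 by omega]
  rw [card_split_double m (fun k => tm (2*i+1+k) = 0 ∧ tm (2*i+1+k+1) = 0)]
  have hEv : ((Finset.range m).filter (fun r => tm (2*i+1+2*r) = 0 ∧ tm (2*i+1+2*r+1) = 0))
      = ((Finset.range m).filter (fun k => tm (i+k) = 1 ∧ tm (i+k+1) = 0)) :=
    Finset.filter_congr (fun r _ => by rw [s5, s6]; generalize tm (i+r+1) = v; generalize tm (i+r) = u; revert u v; decide)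
  have hOd : ((Finset.range m).filter (fun r => tm (2*i+1+(2*r+1)) = 0 ∧ tm (2*i+1+(2*r+1)+1) = 0))
      = ((Finset.range m).filter (fun _ => False)) :=
    Finset.filter_congr (fun r _ => by rw [s7, s8]; generalize tm (i+r+1) = v; revert v; decide)
  rw [hEv, hOd]
  try simp

lemma C6 (i m : ℕ) : cnt 1 1 (2*i+1) (2*m+1) = cnt 0 1 i (m+1) := by
  unfold cnt
  try unfold zf
  try unfold onef
  try unfold zl
  try unfold onel
  rw [show 2*m+1-1 = 2*m by omega]
  try rw [show m+1-1 = m by omega]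
  try rw [show m+2-1 = m+1 by omega]
  rw [card_split_double m (fun k => tm (2*i+1+k) = 1 ∧ tm (2*i+1+k+1) = 1)]
  have hEv : ((Finset.range m).filter (fun r => tm (2*i+1+2*r) = 1 ∧ tm (2*i+1+2*r+1) = 1))
      = ((Finset.range m).filter (fun k => tm (i+k) = 0 ∧ tm (i+k+1) = 1)) :=
    Finset.filter_congr (fun r _ => by rw [s5, s6]; generalize tm (i+r+1) = v; generalize tm (i+r) = u; revert u v; decide)
  have hOd : ((Finset.range m).filter (fun r => tm (2*i+1+(2*r+1)) = 1 ∧ tm (2*i+1+(2*r+1)+1) = 1))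
      = ((Finset.range m).filter (fun _ => False)) :=
    Finset.filter_congr (fun r _ => by rw [s7, s8]; generalize tm (i+r+1) = v; revert v; decide)
  rw [hEv, hOd]
  try simp

lemma C7 (i m : ℕ) : cnt 0 1 (2*i+1) (2*m+1) = cnt 1 1 i (m+1) + zl i m := by
  unfold cnt
  try unfold zf
  try unfold onef
  try unfold zl
  try unfold onel
  rw [show 2*m+1-1 = 2*m by omega]
  try rw [show m+1-1 = m by omega]
  try rw [show m+2-1 = m+1 by omega]
  rw [card_split_double m (fun k => tm (2*i+1+k) = 0 ∧ tm (2*i+1+k+1) = 1)]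
  have hEv : ((Finset.range m).filter (fun r => tm (2*i+1+2*r) = 0 ∧ tm (2*i+1+2*r+1) = 1))
      = ((Finset.range m).filter (fun k => tm (i+k) = 1 ∧ tm (i+k+1) = 1)) :=
    Finset.filter_congr (fun r _ => by rw [s5, s6]; generalize tm (i+r+1) = v; generalize tm (i+r) = u; revert u v; decide)
  have hOd : ((Finset.range m).filter (fun r => tm (2*i+1+(2*r+1)) = 0 ∧ tm (2*i+1+(2*r+1)+1) = 1))
      = ((Finset.range m).filter (fun k => tm (i+k+1) = 0)) :=
    Finset.filter_congr (fun r _ => by rw [s7, s8]; generalize tm (i+r+1) = v; revert v; decide)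
  rw [hEv, hOd]
  try simp

lemma C8 (i m : ℕ) : cnt 1 0 (2*i+1) (2*m+1) = cnt 0 0 i (m+1) + onel i m := by
  unfold cnt
  try unfold zf
  try unfold onef
  try unfold zl
  try unfold onel
  rw [show 2*m+1-1 = 2*m by omega]
  try rw [show m+1-1 = m by omega]
  try rw [show m+2-1 = m+1 by omega]
  rw [card_split_double m (fun k => tm (2*i+1+k) = 1 ∧ tm (2*i+1+k+1) = 0)]
  have hEv : ((Finset.range m).filter (fun r => tm (2*i+1+2*r) = 1 ∧ tm (2*i+1+2*r+1) = 0))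
      = ((Finset.range m).filter (fun k => tm (i+k) = 0 ∧ tm (i+k+1) = 0)) :=
    Finset.filter_congr (fun r _ => by rw [s5, s6]; generalize tm (i+r+1) = v; generalize tm (i+r) = u; revert u v; decide)
  have hOd : ((Finset.range m).filter (fun r => tm (2*i+1+(2*r+1)) = 1 ∧ tm (2*i+1+(2*r+1)+1) = 0))
      = ((Finset.range m).filter (fun k => tm (i+k+1) = 1)) :=
    Finset.filter_congr (fun r _ => by rw [s7, s8]; generalize tm (i+r+1) = v; revert v; decide)
  rw [hEv, hOd]
  try simp

lemma C9 (i m : ℕ) : cnt 0 0 (2*i) (2*m+2) = cnt 1 0 i (m+1) := by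
  unfold cnt
  try unfold zf
  try unfold onef
  try unfold zl
  try unfold onel
  rw [show 2*m+2-1 = 2*m+1 by omega]
  try rw [show m+1-1 = m by omega]
  try rw [show m+2-1 = m+1 by omega]
  rw [card_split_double_odd m (fun k => tm (2*i+k) = 0 ∧ tm (2*i+k+1) = 0)]
  have hEv : ((Finset.range (m+1)).filter (fun r => tm (2*i+2*r) = 0 ∧ tm (2*i+2*r+1) = 0))
      = ((Finset.range (m+1)).filter (fun _ => False)) :=
    Finset.filter_congr (fun r _ => by rw [s1, s2]; generalize tm (i+r) = u; revert u; decide)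
  have hOd : ((Finset.range m).filter (fun r => tm (2*i+(2*r+1)) = 0 ∧ tm (2*i+(2*r+1)+1) = 0))
      = ((Finset.range m).filter (fun k => tm (i+k) = 1 ∧ tm (i+k+1) = 0)) :=
    Finset.filter_congr (fun r _ => by rw [s3, s4]; generalize tm (i+r+1) = v; generalize tm (i+r) = u; revert u v; decide)
  rw [hEv, hOd]
  try simp

lemma C10 (i m : ℕ) : cnt 1 1 (2*i) (2*m+2) = cnt 0 1 i (m+1) := by
  unfold cnt
  try unfold zf
  try unfold onef
  try unfold zl
  try unfold onel
  rw [show 2*m+2-1 = 2*m+1 by omega]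
  try rw [show m+1-1 = m by omega]
  try rw [show m+2-1 = m+1 by omega]
  rw [card_split_double_odd m (fun k => tm (2*i+k) = 1 ∧ tm (2*i+k+1) = 1)]
  have hEv : ((Finset.range (m+1)).filter (fun r => tm (2*i+2*r) = 1 ∧ tm (2*i+2*r+1) = 1))
      = ((Finset.range (m+1)).filter (fun _ => False)) :=
    Finset.filter_congr (fun r _ => by rw [s1, s2]; generalize tm (i+r) = u; revert u; decide)
  have hOd : ((Finset.range m).filter (fun r => tm (2*i+(2*r+1)) = 1 ∧ tm (2*i+(2*r+1)+1) = 1))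
      = ((Finset.range m).filter (fun k => tm (i+k) = 0 ∧ tm (i+k+1) = 1)) :=
    Finset.filter_congr (fun r _ => by rw [s3, s4]; generalize tm (i+r+1) = v; generalize tm (i+r) = u; revert u v; decide)
  rw [hEv, hOd]
  try simp

lemma C11 (i m : ℕ) : cnt 0 1 (2*i) (2*m+2) = zf i (m+1) + cnt 1 1 i (m+1) := by
  unfold cnt
  try unfold zf
  try unfold onef
  try unfold zl
  try unfold onel
  rw [show 2*m+2-1 = 2*m+1 by omega]
  try rw [show m+1-1 = m by omega]
  try rw [show m+2-1 = m+1 by omega]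
  rw [card_split_double_odd m (fun k => tm (2*i+k) = 0 ∧ tm (2*i+k+1) = 1)]
  have hEv : ((Finset.range (m+1)).filter (fun r => tm (2*i+2*r) = 0 ∧ tm (2*i+2*r+1) = 1))
      = ((Finset.range (m+1)).filter (fun k => tm (i+k) = 0)) :=
    Finset.filter_congr (fun r _ => by rw [s1, s2]; generalize tm (i+r) = u; revert u; decide)
  have hOd : ((Finset.range m).filter (fun r => tm (2*i+(2*r+1)) = 0 ∧ tm (2*i+(2*r+1)+1) = 1))
      = ((Finset.range m).filter (fun k => tm (i+k) = 1 ∧ tm (i+k+1) = 1)) :=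
    Finset.filter_congr (fun r _ => by rw [s3, s4]; generalize tm (i+r+1) = v; generalize tm (i+r) = u; revert u v; decide)
  rw [hEv, hOd]
  try simp

lemma C12 (i m : ℕ) : cnt 1 0 (2*i) (2*m+2) = onef i (m+1) + cnt 0 0 i (m+1) := by
  unfold cnt
  try unfold zf
  try unfold onef
  try unfold zl
  try unfold onel
  rw [show 2*m+2-1 = 2*m+1 by omega]
  try rw [show m+1-1 = m by omega]
  try rw [show m+2-1 = m+1 by omega]
  rw [card_split_double_odd m (fun k => tm (2*i+k) = 1 ∧ tm (2*i+k+1) = 0)]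
  have hEv : ((Finset.range (m+1)).filter (fun r => tm (2*i+2*r) = 1 ∧ tm (2*i+2*r+1) = 0))
      = ((Finset.range (m+1)).filter (fun k => tm (i+k) = 1)) :=
    Finset.filter_congr (fun r _ => by rw [s1, s2]; generalize tm (i+r) = u; revert u; decide)
  have hOd : ((Finset.range m).filter (fun r => tm (2*i+(2*r+1)) = 1 ∧ tm (2*i+(2*r+1)+1) = 0))
      = ((Finset.range m).filter (fun k => tm (i+k) = 0 ∧ tm (i+k+1) = 0)) :=
    Finset.filter_congr (fun r _ => by rw [s3, s4]; generalize tm (i+r+1) = v; generalize tm (i+r) = u; revert u v; decide)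
  rw [hEv, hOd]
  try simp

lemma C13 (i m : ℕ) : cnt 0 0 (2*i+1) (2*m+2) = cnt 1 0 i (m+2) := by
  unfold cnt
  try unfold zf
  try unfold onef
  try unfold zl
  try unfold onel
  rw [show 2*m+2-1 = 2*m+1 by omega]
  try rw [show m+1-1 = m by omega]
  try rw [show m+2-1 = m+1 by omega]
  rw [card_split_double_odd m (fun k => tm (2*i+1+k) = 0 ∧ tm (2*i+1+k+1) = 0)]
  have hEv : ((Finset.range (m+1)).filter (fun r => tm (2*i+1+2*r) = 0 ∧ tm (2*i+1+2*r+1) = 0))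
      = ((Finset.range (m+1)).filter (fun k => tm (i+k) = 1 ∧ tm (i+k+1) = 0)) :=
    Finset.filter_congr (fun r _ => by rw [s5, s6]; generalize tm (i+r+1) = v; generalize tm (i+r) = u; revert u v; decide)
  have hOd : ((Finset.range m).filter (fun r => tm (2*i+1+(2*r+1)) = 0 ∧ tm (2*i+1+(2*r+1)+1) = 0))
      = ((Finset.range m).filter (fun _ => False)) :=
    Finset.filter_congr (fun r _ => by rw [s7, s8]; generalize tm (i+r+1) = v; revert v; decide)
  rw [hEv, hOd]
  try simp

lemma C14 (i m : ℕ) : cnt 1 1 (2*i+1) (2*m+2) = cnt 0 1 i (m+2) := by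
  unfold cnt
  try unfold zf
  try unfold onef
  try unfold zl
  try unfold onel
  rw [show 2*m+2-1 = 2*m+1 by omega]
  try rw [show m+1-1 = m by omega]
  try rw [show m+2-1 = m+1 by omega]
  rw [card_split_double_odd m (fun k => tm (2*i+1+k) = 1 ∧ tm (2*i+1+k+1) = 1)]
  have hEv : ((Finset.range (m+1)).filter (fun r => tm (2*i+1+2*r) = 1 ∧ tm (2*i+1+2*r+1) = 1))
      = ((Finset.range (m+1)).filter (fun k => tm (i+k) = 0 ∧ tm (i+k+1) = 1)) :=
    Finset.filter_congr (fun r _ => by rw [s5, s6]; generalize tm (i+r+1) = v; generalize tm (i+r) = u; revert u v; decide)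
  have hOd : ((Finset.range m).filter (fun r => tm (2*i+1+(2*r+1)) = 1 ∧ tm (2*i+1+(2*r+1)+1) = 1))
      = ((Finset.range m).filter (fun _ => False)) :=
    Finset.filter_congr (fun r _ => by rw [s7, s8]; generalize tm (i+r+1) = v; revert v; decide)
  rw [hEv, hOd]
  try simp

lemma C15 (i m : ℕ) : cnt 0 1 (2*i+1) (2*m+2) = cnt 1 1 i (m+2) + zl i m := by
  unfold cnt
  try unfold zf
  try unfold onef
  try unfold zl
  try unfold onel
  rw [show 2*m+2-1 = 2*m+1 by omega]
  try rw [show m+1-1 = m by omega]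
  try rw [show m+2-1 = m+1 by omega]
  rw [card_split_double_odd m (fun k => tm (2*i+1+k) = 0 ∧ tm (2*i+1+k+1) = 1)]
  have hEv : ((Finset.range (m+1)).filter (fun r => tm (2*i+1+2*r) = 0 ∧ tm (2*i+1+2*r+1) = 1))
      = ((Finset.range (m+1)).filter (fun k => tm (i+k) = 1 ∧ tm (i+k+1) = 1)) :=
    Finset.filter_congr (fun r _ => by rw [s5, s6]; generalize tm (i+r+1) = v; generalize tm (i+r) = u; revert u v; decide)
  have hOd : ((Finset.range m).filter (fun r => tm (2*i+1+(2*r+1)) = 0 ∧ tm (2*i+1+(2*r+1)+1) = 1))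
      = ((Finset.range m).filter (fun k => tm (i+k+1) = 0)) :=
    Finset.filter_congr (fun r _ => by rw [s7, s8]; generalize tm (i+r+1) = v; revert v; decide)
  rw [hEv, hOd]
  try simp

lemma C16 (i m : ℕ) : cnt 1 0 (2*i+1) (2*m+2) = cnt 0 0 i (m+2) + onel i m := by
  unfold cnt
  try unfold zf
  try unfold onef
  try unfold zl
  try unfold onel
  rw [show 2*m+2-1 = 2*m+1 by omega]
  try rw [show m+1-1 = m by omega]
  try rw [show m+2-1 = m+1 by omega]
  rw [card_split_double_odd m (fun k => tm (2*i+1+k) = 1 ∧ tm (2*i+1+k+1) = 0)]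
  have hEv : ((Finset.range (m+1)).filter (fun r => tm (2*i+1+2*r) = 1 ∧ tm (2*i+1+2*r+1) = 0))
      = ((Finset.range (m+1)).filter (fun k => tm (i+k) = 0 ∧ tm (i+k+1) = 0)) :=
    Finset.filter_congr (fun r _ => by rw [s5, s6]; generalize tm (i+r+1) = v; generalize tm (i+r) = u; revert u v; decide)
  have hOd : ((Finset.range m).filter (fun r => tm (2*i+1+(2*r+1)) = 1 ∧ tm (2*i+1+(2*r+1)+1) = 0))
      = ((Finset.range m).filter (fun k => tm (i+k+1) = 1)) :=
    Finset.filter_congr (fun r _ => by rw [s7, s8]; generalize tm (i+r+1) = v; revert v; decide)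
  rw [hEv, hOd]
  try simp

abbrev T6 := Fin 2 × Fin 2 × ℤ × ℤ × ℤ × ℤ

def e1 (t : T6) : T6 :=
  (t.1, t.2.1, t.2.2.2.2.1, t.2.2.1 + t.2.2.2.1 + t.2.2.2.2.2,
    t.2.2.1 + t.2.2.2.2.1 + t.2.2.2.2.2, t.2.2.2.1)
def e2 (t : T6) : T6 :=
  (1 + t.1, 1 + t.2.1, t.2.2.2.2.1, t.2.2.1 + t.2.2.2.2.1 + t.2.2.2.2.2,
    t.2.2.1 + t.2.2.2.1 + t.2.2.2.2.2, t.2.2.2.1)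
def g1 (t : T6) : T6 :=
  (t.1, 1 + t.2.1, t.2.2.2.2.1,
    t.2.2.1 + t.2.2.2.1 + t.2.2.2.2.2 + (1 - ((t.2.1 : Fin 2).val : ℤ)),
    t.2.2.1 + t.2.2.2.2.1 + t.2.2.2.2.2 + ((t.2.1 : Fin 2).val : ℤ), t.2.2.2.1)
def g2 (t : T6) : T6 :=
  (1 + t.1, t.2.1, t.2.2.2.2.1,
    t.2.2.1 + t.2.2.2.2.1 + t.2.2.2.2.2 - (1 - ((t.2.1 : Fin 2).val : ℤ)),
    t.2.2.1 + t.2.2.2.1 + t.2.2.2.2.2 - ((t.2.1 : Fin 2).val : ℤ), t.2.2.2.1)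
def cmp (t : T6) : T6 :=
  (1 + t.1, 1 + t.2.1, t.2.2.2.2.2, t.2.2.2.2.1, t.2.2.2.1, t.2.2.1)
def rho (K : ℤ) (t : T6) : T6 :=
  (t.1, t.2.1, K - t.2.2.1, 2*K - t.2.2.2.2.1, 2*K - t.2.2.2.1, K - t.2.2.2.2.2)

def tupleOf (j n : ℕ) : T6 :=
  (tm j, tm (j+(n-1)), (cnt 0 0 j n : ℤ), (cnt 0 1 j n : ℤ),
    (cnt 1 0 j n : ℤ), (cnt 1 1 j n : ℤ))

def Wt (n : ℕ) : Set T6 := Set.range (fun j => tupleOf j n)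

lemma fin2_cases : ∀ u : Fin 2, u = 0 ∨ u = 1 := by decide

lemma zf_succ' (i m : ℕ) : (zf i (m+1) : ℤ) = zf i m + (1 - ((tm (i+m)).val : ℤ)) := by
  rw [zf_succ]
  rcases fin2_cases (tm (i+m)) with h | h <;> rw [h] <;> simp
lemma onef_succ' (i m : ℕ) : (onef i (m+1) : ℤ) = onef i m + ((tm (i+m)).val : ℤ) := by
  rw [onef_succ]
  rcases fin2_cases (tm (i+m)) with h | h <;> rw [h] <;> simp
lemma zl_succ' (i m : ℕ) : (zl i (m+1) : ℤ) = zl i m + (1 - ((tm (i+m+1)).val : ℤ)) := by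
  rw [zl_succ]
  rcases fin2_cases (tm (i+m+1)) with h | h <;> rw [h] <;> simp
lemma onel_succ' (i m : ℕ) : (onel i (m+1) : ℤ) = onel i m + ((tm (i+m+1)).val : ℤ) := by
  rw [onel_succ]
  rcases fin2_cases (tm (i+m+1)) with h | h <;> rw [h] <;> simp

lemma tuple_e1 (i m : ℕ) : tupleOf (2*i) (2*m+1) = e1 (tupleOf i (m+1)) := by
  unfold tupleOf e1
  have h1 : 2*m+1-1 = 2*m := by omega
  have h2 : m+1-1 = m := by omega
  rw [h1, h2]
  dsimp only
  have hc3 := C3 i m; have hzf := Zf_eq i m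
  have hc4 := C4 i m; have hof := Of_eq i m
  have hc1 := C1 i m; have hc2 := C2 i m
  simp only [Prod.mk.injEq]
  refine ⟨tm_two_mul i, ?_, ?_, ?_, ?_, ?_⟩
  · show tm (2*i+2*m) = tm (i+m)
    rw [show 2*i+2*m = 2*(i+m) by ring, tm_two_mul]
  all_goals push_cast; omega

lemma tuple_e2 (i m : ℕ) : tupleOf (2*i+1) (2*m+1) = e2 (tupleOf i (m+1)) := by
  unfold tupleOf e2
  have h1 : 2*m+1-1 = 2*m := by omega
  have h2 : m+1-1 = m := by omega
  rw [h1, h2]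
  dsimp only
  have hc7 := C7 i m; have hzl := Zl_eq i m
  have hc8 := C8 i m; have hol := Ol_eq i m
  have hc5 := C5 i m; have hc6 := C6 i m
  simp only [Prod.mk.injEq]
  refine ⟨tm_two_mul_add_one i, ?_, ?_, ?_, ?_, ?_⟩
  · show tm (2*i+1+2*m) = 1 + tm (i+m)
    rw [show 2*i+1+2*m = 2*(i+m)+1 by ring, tm_two_mul_add_one]
  all_goals push_cast; omega

lemma tuple_g1 (i m : ℕ) : tupleOf (2*i) (2*m+2) = g1 (tupleOf i (m+1)) := by
  unfold tupleOf g1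
  have h1 : 2*m+2-1 = 2*m+1 := by omega
  have h2 : m+1-1 = m := by omega
  rw [h1, h2]
  dsimp only
  have hc11 := C11 i m; have hzf := Zf_eq i m; have hzfs := zf_succ i m
  have hc12 := C12 i m; have hof := Of_eq i m; have hofs := onef_succ i m
  have hc9 := C9 i m; have hc10 := C10 i m
  simp only [Prod.mk.injEq]
  refine ⟨tm_two_mul i, ?_, ?_, ?_, ?_, ?_⟩
  · show tm (2*i+(2*m+1)) = 1 + tm (i+m)
    rw [show 2*i+(2*m+1) = 2*(i+m)+1 by ring, tm_two_mul_add_one]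
  all_goals push_cast [hc9, hc10, hc11, hc12, zf_succ', onef_succ'] <;> omega

lemma tuple_g2 (i m : ℕ) : tupleOf (2*i+1) (2*m+2) = g2 (tupleOf i (m+2)) := by
  unfold tupleOf g2
  have h1 : 2*m+2-1 = 2*m+1 := by omega
  have h2 : m+2-1 = m+1 := by omega
  rw [h1, h2]
  dsimp only
  have hc15 := C15 i m; have hzl := Zl_eq i (m+1); rw [show m+1+1 = m+2 by omega] at hzl
  have hc16 := C16 i m; have hol := Ol_eq i (m+1); rw [show m+1+1 = m+2 by omega] at hol
  have hc13 := C13 i m; have hc14 := C14 i m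
  have hzls := zl_succ' i m; have hols := onel_succ' i m
  simp only [Prod.mk.injEq]
  refine ⟨tm_two_mul_add_one i, ?_, ?_, ?_, ?_, ?_⟩
  · show tm (2*i+1+(2*m+1)) = tm (i+(m+1))
    rw [show 2*i+1+(2*m+1) = 2*(i+(m+1)) by ring, tm_two_mul]
  all_goals try simp only [show i+(m+1) = i+m+1 by omega]
  all_goals push_cast [hc13, hc14, hc15, hc16] <;> omega

lemma Rodd (m : ℕ) : Wt (2*m+1) = e1 '' Wt (m+1) ∪ e2 '' Wt (m+1) := by
  ext p
  constructor
  · rintro ⟨j, rfl⟩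
    rcases Nat.even_or_odd j with ⟨i, hi⟩ | ⟨i, hi⟩
    · refine Or.inl ⟨tupleOf i (m+1), ⟨i, rfl⟩, ?_⟩
      show e1 (tupleOf i (m+1)) = tupleOf j (2*m+1)
      rw [show j = 2*i by omega]; exact (tuple_e1 i m).symm
    · refine Or.inr ⟨tupleOf i (m+1), ⟨i, rfl⟩, ?_⟩
      show e2 (tupleOf i (m+1)) = tupleOf j (2*m+1)
      rw [hi]; exact (tuple_e2 i m).symm
  · rintro (⟨_, ⟨i, rfl⟩, rfl⟩ | ⟨_, ⟨i, rfl⟩, rfl⟩)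
    · exact ⟨2*i, (tuple_e1 i m)⟩
    · exact ⟨2*i+1, (tuple_e2 i m)⟩

lemma Reven (m : ℕ) : Wt (2*m+2) = g1 '' Wt (m+1) ∪ g2 '' Wt (m+2) := by
  ext p
  constructor
  · rintro ⟨j, rfl⟩
    rcases Nat.even_or_odd j with ⟨i, hi⟩ | ⟨i, hi⟩
    · refine Or.inl ⟨tupleOf i (m+1), ⟨i, rfl⟩, ?_⟩
      show g1 (tupleOf i (m+1)) = tupleOf j (2*m+2)
      rw [show j = 2*i by omega]; exact (tuple_g1 i m).symm
    · refine Or.inr ⟨tupleOf i (m+2), ⟨i, rfl⟩, ?_⟩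
      show g2 (tupleOf i (m+2)) = tupleOf j (2*m+2)
      rw [hi]; exact (tuple_g2 i m).symm
  · rintro (⟨_, ⟨i, rfl⟩, rfl⟩ | ⟨_, ⟨i, rfl⟩, rfl⟩)
    · exact ⟨2*i, (tuple_g1 i m)⟩
    · exact ⟨2*i+1, (tuple_g2 i m)⟩

lemma cnt_shift (x y : Fin 2) (j n : ℕ) :
    cnt x y (2^(j+n) + j) n = cnt (1+x) (1+y) j n := by
  unfold cnt
  refine congrArg Finset.card (Finset.filter_congr (fun k hk => ?_))
  rw [Finset.mem_range] at hk
  rw [show 2^(j+n) + j + k = 2^(j+n) + (j+k) by ring,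
      show 2^(j+n) + (j+k) + 1 = 2^(j+n) + (j+k+1) by ring,
      tm_pow_add _ _ (by calc j+k < j+n := by omega
                          _ < 2^(j+n) := Nat.lt_two_pow_self),
      tm_pow_add _ _ (by calc j+k+1 ≤ j+n := by omega
                          _ < 2^(j+n) := Nat.lt_two_pow_self)]
  generalize tm (j+k) = u
  generalize tm (j+k+1) = v
  revert u v x y
  decide

lemma tuple_cmp (j n : ℕ) (hn : 1 ≤ n) :
    tupleOf (2^(j+n) + j) n = cmp (tupleOf j n) := by
  unfold tupleOf cmp
  have h00 := cnt_shift 0 0 j n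
  have h01 := cnt_shift 0 1 j n
  have h10 := cnt_shift 1 0 j n
  have h11 := cnt_shift 1 1 j n
  rw [show (1+0 : Fin 2) = 1 by decide] at h00 h01 h10
  rw [show (1+1 : Fin 2) = 0 by decide] at h01 h10 h11
  simp only [Prod.mk.injEq]
  refine ⟨?_, ?_, ?_, ?_, ?_, ?_⟩
  · exact tm_pow_add _ _ (by calc j < j+n := by omega
                              _ < 2^(j+n) := Nat.lt_two_pow_self)
  · show tm (2^(j+n) + j + (n-1)) = 1 + tm (j + (n-1))
    rw [show 2^(j+n) + j + (n-1) = 2^(j+n) + (j+(n-1)) by ring]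
    exact tm_pow_add _ _ (by calc j+(n-1) < j+n := by omega
                              _ < 2^(j+n) := Nat.lt_two_pow_self)
  all_goals simp [h00, h01, h10, h11]

lemma cmp_cmp (t : T6) : cmp (cmp t) = t := by
  obtain ⟨x, y, a, b, c, d⟩ := t
  unfold cmp
  dsimp only
  rcases fin2_cases x with rfl | rfl <;> rcases fin2_cases y with rfl | rfl <;> rfl

lemma Wt_cmp (n : ℕ) (hn : 1 ≤ n) : cmp '' Wt n = Wt n := by
  apply Set.Subset.antisymm
  · rintro _ ⟨_, ⟨j, rfl⟩, rfl⟩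
    exact ⟨2^(j+n) + j, (tuple_cmp j n hn)⟩
  · rintro _ ⟨j, rfl⟩
    refine ⟨tupleOf (2^(j+n) + j) n, ⟨_, rfl⟩, ?_⟩
    rw [tuple_cmp j n hn, cmp_cmp]

lemma fin2_val_one_add (u : Fin 2) : (((1+u : Fin 2)).val : ℤ) = 1 - (u.val : ℤ) := by
  rcases fin2_cases u with rfl | rfl <;> rfl

lemma t6_ext {x x' y y' : Fin 2} {a a' b b' c c' d d' : ℤ}
    (h1 : x = x') (h2 : y = y') (h3 : a = a') (h4 : b = b') (h5 : c = c') (h6 : d = d') :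
    ((x,y,a,b,c,d) : T6) = (x',y',a',b',c',d') := by
  subst h1; subst h2; subst h3; subst h4; subst h5; subst h6; rfl

lemma L1 (K : ℤ) (t : T6) : e1 (rho K (cmp t)) = rho (2*K) (e2 t) := by
  obtain ⟨x, y, a, b, c, d⟩ := t
  unfold e1 e2 rho cmp
  dsimp only
  exact t6_ext rfl rfl (by ring) (by ring) (by ring) (by ring)

lemma L2 (K : ℤ) (t : T6) : e2 (rho K (cmp t)) = rho (2*K) (e1 t) := by
  obtain ⟨x, y, a, b, c, d⟩ := t
  unfold e1 e2 rho cmp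
  dsimp only
  exact t6_ext (by rcases fin2_cases x with rfl | rfl <;> rfl)
    (by rcases fin2_cases y with rfl | rfl <;> rfl) (by ring) (by ring) (by ring) (by ring)

lemma L3 (K : ℤ) (t : T6) : g1 (rho K (cmp t)) = rho (2*K) (g2 t) := by
  obtain ⟨x, y, a, b, c, d⟩ := t
  unfold g1 g2 rho cmp
  dsimp only
  rw [fin2_val_one_add]
  exact t6_ext rfl (by rcases fin2_cases y with rfl | rfl <;> rfl)
    (by ring) (by ring) (by ring) (by ring)

lemma L4 (K : ℤ) (t : T6) : g2 (rho K (cmp t)) = rho (2*K) (g1 t) := by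
  obtain ⟨x, y, a, b, c, d⟩ := t
  unfold g1 g2 rho cmp
  dsimp only
  rw [fin2_val_one_add]
  exact t6_ext (by rcases fin2_cases x with rfl | rfl <;> rfl) rfl
    (by ring) (by ring) (by ring) (by ring)

lemma rho_rho (K : ℤ) (t : T6) : rho K (rho K t) = t := by
  obtain ⟨x, y, a, b, c, d⟩ := t
  unfold rho
  dsimp only
  exact t6_ext rfl rfl (by ring) (by ring) (by ring) (by ring)

lemma rho_inj (K : ℤ) : Function.Injective (rho K) :=
  Function.LeftInverse.injective (rho_rho K)

lemma cnt_len2 (x y : Fin 2) (j : ℕ) :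
    cnt x y j 2 = if (tm j = x ∧ tm (j+1) = y) then 1 else 0 := by
  unfold cnt
  rw [show (2:ℕ)-1 = 1 by omega, Finset.range_one, Finset.filter_singleton]
  split_ifs with h1 h2 h2
  · simp
  · exact absurd (by simpa using h1) h2
  · exact absurd (by simpa using h2) h1
  · simp

def F2 : Finset T6 :=
  {((0:Fin 2),(1:Fin 2),(0:ℤ),(1:ℤ),(0:ℤ),(0:ℤ)), (1,1,0,0,0,1), (1,0,0,0,1,0), (0,0,1,0,0,0)}
def F3 : Finset T6 := F2.image e1 ∪ F2.image e2
def F4 : Finset T6 := F2.image g1 ∪ F3.image g2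
def F5 : Finset T6 := F3.image e1 ∪ F3.image e2

lemma Wt2 : Wt 2 = ↑F2 := by
  apply Set.Subset.antisymm
  · rintro _ ⟨j, rfl⟩
    show tupleOf j 2 ∈ (F2 : Set T6)
    unfold tupleOf F2
    rcases fin2_cases (tm j) with h0 | h0 <;> rcases fin2_cases (tm (j+1)) with h1 | h1 <;>
      simp [cnt_len2, h0, h1, show j+(2-1) = j+1 by omega]
  · intro p hp
    simp only [F2, Finset.coe_insert, Set.mem_insert_iff, Finset.coe_singleton,
      Set.mem_singleton_iff] at hp
    rcases hp with rfl | rfl | rfl | rfl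
    · exact ⟨0, by unfold tupleOf; simp [cnt_len2, tm_zero, tm_one]⟩
    · exact ⟨1, by unfold tupleOf; simp [cnt_len2, tm_one, tm_two]⟩
    · exact ⟨2, by unfold tupleOf; simp [cnt_len2, tm_two, tm_three]⟩
    · exact ⟨5, by unfold tupleOf; simp [cnt_len2, tm_five, tm_six]⟩

lemma Wt3 : Wt 3 = ↑F3 := by
  have h := Rodd 1
  norm_num at h
  rw [h, Wt2, F3, Finset.coe_union, Finset.coe_image, Finset.coe_image]

lemma Wt4 : Wt 4 = ↑F4 := by
  have h := Reven 1
  norm_num at h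
  rw [h, Wt2, Wt3, F4, Finset.coe_union, Finset.coe_image, Finset.coe_image]

lemma Wt5 : Wt 5 = ↑F5 := by
  have h := Rodd 2
  norm_num at h
  rw [h, Wt3, F5, Finset.coe_union, Finset.coe_image, Finset.coe_image]

lemma pal_base0 : Wt 5 = rho 1 '' Wt 3 := by
  rw [Wt3, Wt5, ← Finset.coe_image]
  exact congrArg _ (by decide : F5 = F3.image (rho 1))

lemma pal_base1 : Wt 4 = rho 1 '' Wt 4 := by
  nth_rewrite 1 [Wt4]
  rw [Wt4, ← Finset.coe_image]
  exact congrArg _ (by decide : F4 = F4.image (rho 1))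

lemma img_ab {A B : T6 → T6} (K : ℤ) (S : Set T6) (hS : cmp '' S = S)
    (hAB : ∀ t, A (rho K (cmp t)) = rho (2*K) (B t)) :
    A '' (rho K '' S) = rho (2*K) '' (B '' S) := by
  conv_lhs => rw [← hS]
  rw [← Set.image_comp, ← Set.image_comp, ← Set.image_comp]
  exact Set.image_congr' (fun t => hAB t)

theorem pal : ∀ q : ℕ, 1 ≤ q → ∀ i : ℕ, i ≤ 2^(q-1) →
    Wt (2^(q+1)+1-i) = rho ((2:ℤ)^(q-1)) '' Wt (2^q+1+i) := by
  intro q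
  induction q with
  | zero => omega
  | succ q ih =>
    intro _ i hi
    rcases Nat.eq_zero_or_pos q with rfl | hq
    · -- base cases q+1 = 1
      norm_num at hi ⊢
      interval_cases i
      · simpa using pal_base0
      · simpa using pal_base1
    · -- inductive step
      have hp0 : 2^q = 2 * 2^(q-1) := by
        rw [← pow_succ']
        congr 1
        omega
      have hp1 : 2^(q+1) = 2 * 2^q := by rw [pow_succ]; ring
      have hp2 : 2^(q+1+1) = 2 * 2^(q+1) := by rw [pow_succ]; ring
      have hK : ((2:ℤ))^(q+1-1) = 2 * (2:ℤ)^(q-1) := by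
        rw [← pow_succ']
        congr 1
        omega
      have hi' : i ≤ 2^q := by
        have : q+1-1 = q := by omega
        rwa [this] at hi
      set K : ℤ := (2:ℤ)^(q-1) with hKdef
      rcases Nat.even_or_odd i with ⟨s, hs⟩ | ⟨s, hs⟩
      · -- i = 2s
        have hsle : s ≤ 2^(q-1) := by omega
        have hn : 2^(q+1)+1+i = 2*(2^q+s)+1 := by omega
        have hN : 2^(q+1+1)+1-i = 2*(2^(q+1)-s)+1 := by omega
        have hM1 : (2^(q+1)-s)+1 = 2^(q+1)+1-s := by omega
        have hm1 : (2^q+s)+1 = 2^q+1+s := by omega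
        have hIH := ih hq s hsle
        have hcmp : cmp '' Wt (2^q+1+s) = Wt (2^q+1+s) := Wt_cmp _ (by omega)
        rw [hN, Rodd, hM1, hIH, hn, Rodd, hm1,
            img_ab K _ hcmp (fun t => L1 K t), img_ab K _ hcmp (fun t => L2 K t),
            ← Set.image_union, hK]
        exact congrArg _ (Set.union_comm _ _)
      · -- i = 2s+1
        have hsle1 : s+1 ≤ 2^(q-1) := by omega
        have hsle0 : s ≤ 2^(q-1) := by omega
        have hn : 2^(q+1)+1+i = 2*(2^q+s)+2 := by omega
        have hN : 2^(q+1+1)+1-i = 2*(2^(q+1)-s-1)+2 := by omega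
        have hM1 : (2^(q+1)-s-1)+1 = 2^(q+1)+1-(s+1) := by omega
        have hM2 : (2^(q+1)-s-1)+2 = 2^(q+1)+1-s := by omega
        have hm1 : (2^q+s)+1 = 2^q+1+s := by omega
        have hm2 : (2^q+s)+2 = 2^q+1+(s+1) := by omega
        have hIH1 := ih hq (s+1) hsle1
        have hIH0 := ih hq s hsle0
        have hcmp1 : cmp '' Wt (2^q+1+s) = Wt (2^q+1+s) := Wt_cmp _ (by omega)
        have hcmp2 : cmp '' Wt (2^q+1+(s+1)) = Wt (2^q+1+(s+1)) := Wt_cmp _ (by omega)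
        rw [hN, Reven, hM1, hM2, hIH1, hIH0, hn, Reven, hm1, hm2,
            img_ab K _ hcmp2 (fun t => L3 K t), img_ab K _ hcmp1 (fun t => L4 K t),
            ← Set.image_union, hK]
        exact congrArg _ (Set.union_comm _ _)

lemma tmWord_length (j n : ℕ) : (tmWord j n).length = n := by simp [tmWord]

lemma tmWord_getElem (j n k : ℕ) (h : k < (tmWord j n).length) :
    (tmWord j n)[k] = tm (j+k) := by
  simp [tmWord] at h ⊢

lemma list_filter_length_eq_card (n : ℕ) (p : ℕ → Prop) [DecidablePred p] :
    ((List.range n).filter (fun i => decide (p i))).length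
      = ((Finset.range n).filter p).card := rfl

lemma occ_eq_cnt (j n : ℕ) (x y : Fin 2) (hn : 1 ≤ n) :
    occCount (tmWord j n) [x, y] = cnt x y j n := by
  obtain ⟨m, rfl⟩ : ∃ m, n = m+1 := ⟨n-1, by omega⟩
  unfold occCount cnt
  rw [tmWord_length]
  rw [list_filter_length_eq_card (m+1)
    (fun i => ((tmWord j (m+1)).drop i).take ([x,y]).length = [x,y])]
  have hQlast : ¬ (((tmWord j (m+1)).drop m).take ([x,y]).length = [x,y]) := by
    intro h
    apply_fun List.length at h
    rw [List.length_take, List.length_drop, tmWord_length] at h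
    simp at h
  have hstep : ∀ i, i < m →
      ((((tmWord j (m+1)).drop i).take ([x,y]).length = [x,y])
        ↔ (tm (j+i) = x ∧ tm (j+i+1) = y)) := by
    intro i hi
    have h1 : i < (tmWord j (m+1)).length := by rw [tmWord_length]; omega
    have h2 : i+1 < (tmWord j (m+1)).length := by rw [tmWord_length]; omega
    rw [List.drop_eq_getElem_cons h1, List.drop_eq_getElem_cons h2,
        tmWord_getElem j (m+1) i h1, tmWord_getElem j (m+1) (i+1) h2]
    show ((tm (j+i) :: tm (j+(i+1)) :: _).take 2 = [x,y]) ↔ _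
    rw [List.take_succ_cons, List.take_succ_cons, List.take_zero]
    rw [show j+(i+1) = j+i+1 by omega]
    simp
  rw [Finset.range_add_one, Finset.filter_insert, if_neg hQlast,
      show m+1-1 = m by omega]
  exact congrArg Finset.card
    (Finset.filter_congr (fun i hi => hstep i (Finset.mem_range.mp hi)))

abbrev LD := List (Fin 2) × List (Fin 2) × ℕ × ℕ × ℕ × ℕ

def ldata (w : List (Fin 2)) : LD :=
  (w.take 1, w.drop (w.length - 1), occCount w [0,0], occCount w [0,1],
    occCount w [1,0], occCount w [1,1])

lemma two_abelian_iff (u v : List (Fin 2)) :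
    TwoAbelianEquiv u v ↔ (u.length = v.length ∧ ldata u = ldata v) := by
  unfold TwoAbelianEquiv ldata
  constructor
  · rintro ⟨h1, h2, h3, h4⟩
    refine ⟨h1, ?_⟩
    simp only [Prod.mk.injEq]
    exact ⟨h2, h3, h4 [0,0] rfl, h4 [0,1] rfl, h4 [1,0] rfl, h4 [1,1] rfl⟩
  · rintro ⟨h1, h2⟩
    simp only [Prod.mk.injEq] at h2
    obtain ⟨h2a, h2b, h2c, h2d, h2e, h2f⟩ := h2
    refine ⟨h1, h2a, h2b, ?_⟩
    intro x hx
    obtain ⟨a, b, rfl⟩ := List.length_eq_two.mp hx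
    rcases fin2_cases a with rfl | rfl <;> rcases fin2_cases b with rfl | rfl <;> assumption

lemma ldata_tmWord (j n : ℕ) (hn : 1 ≤ n) :
    ldata (tmWord j n) = ([tm j], [tm (j+(n-1))],
      cnt 0 0 j n, cnt 0 1 j n, cnt 1 0 j n, cnt 1 1 j n) := by
  unfold ldata
  have h0 : 0 < (tmWord j n).length := by rw [tmWord_length]; omega
  have h1 : n-1 < (tmWord j n).length := by rw [tmWord_length]; omega
  simp only [Prod.mk.injEq]
  refine ⟨?_, ?_, occ_eq_cnt j n 0 0 hn, occ_eq_cnt j n 0 1 hn,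
    occ_eq_cnt j n 1 0 hn, occ_eq_cnt j n 1 1 hn⟩
  · have e : tmWord j n = (tmWord j n)[0] :: (tmWord j n).drop 1 := by
      conv_lhs => rw [← List.drop_zero (l := tmWord j n)]
      exact List.drop_eq_getElem_cons h0
    conv_lhs => rw [e]
    rw [tmWord_getElem j n 0 h0]
    simp
  · rw [tmWord_length, List.drop_eq_getElem_cons h1, tmWord_getElem j n (n-1) h1]
    have e2 : (tmWord j n).drop (n-1+1) = [] := by
      apply List.drop_eq_nil_of_le
      rw [tmWord_length]; omega
    rw [e2]




def conv (p : LD) : T6 :=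
  (p.1.headI, p.2.1.headI, (p.2.2.1 : ℤ), (p.2.2.2.1 : ℤ), (p.2.2.2.2.1 : ℤ), (p.2.2.2.2.2 : ℤ))

def dmap (n : ℕ) (u : {w : List (Fin 2) // w.length = n ∧ IsFactor w}) : LD := ldata u.1

lemma dmap_iff (n : ℕ) (u v : {w : List (Fin 2) // w.length = n ∧ IsFactor w}) :
    TwoAbelianEquiv u.1 v.1 ↔ dmap n u = dmap n v := by
  have hl : u.1.length = v.1.length := by rw [u.2.1, v.2.1]
  rw [two_abelian_iff]
  exact ⟨fun h => h.2, fun h => ⟨hl, h⟩⟩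

noncomputable def E (n : ℕ) :
    Quot (fun u v : {w : List (Fin 2) // w.length = n ∧ IsFactor w} =>
      TwoAbelianEquiv u.1 v.1) ≃ Set.range (dmap n) where
  toFun := Quot.lift (fun u => ⟨dmap n u, ⟨u, rfl⟩⟩)
    (fun u v h => Subtype.ext ((dmap_iff n u v).mp h))
  invFun s := Quot.mk _ s.2.choose
  left_inv := by
    apply Quot.ind
    intro u
    apply Quot.sound
    apply (dmap_iff n _ _).mpr
    exact Exists.choose_spec (⟨u, rfl⟩ : ∃ a, dmap n a = dmap n u)
  right_inv s := Subtype.ext s.2.choose_spec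

lemma conv_range (n : ℕ) (hn : 1 ≤ n) : conv '' (Set.range (dmap n)) = Wt n := by
  ext p
  constructor
  · rintro ⟨_, ⟨u, rfl⟩, rfl⟩
    obtain ⟨i, hu⟩ := u.2.2
    rw [u.2.1] at hu
    refine ⟨i, ?_⟩
    show tupleOf i n = conv (dmap n u)
    unfold dmap
    rw [hu, ldata_tmWord i n hn]
    rfl
  · rintro ⟨i, rfl⟩
    have hfac : (tmWord i n).length = n ∧ IsFactor (tmWord i n) :=
      ⟨tmWord_length i n, ⟨i, by rw [tmWord_length]⟩⟩
    refine ⟨dmap n ⟨tmWord i n, hfac⟩, ⟨⟨_, rfl⟩, ?_⟩⟩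
    show conv (ldata (tmWord i n)) = tupleOf i n
    rw [ldata_tmWord i n hn]
    rfl

lemma conv_injOn (n : ℕ) (hn : 1 ≤ n) : Set.InjOn conv (Set.range (dmap n)) := by
  rintro _ ⟨u, rfl⟩ _ ⟨v, rfl⟩ h
  obtain ⟨iu, hu⟩ := u.2.2
  rw [u.2.1] at hu
  obtain ⟨iv, hv⟩ := v.2.2
  rw [v.2.1] at hv
  unfold dmap at h ⊢
  rw [hu, ldata_tmWord iu n hn] at h ⊢
  rw [hv, ldata_tmWord iv n hn] at h ⊢
  unfold conv at h
  simp only [List.headI, Prod.mk.injEq] at h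
  obtain ⟨e1, e2, e3, e4, e5, e6⟩ := h
  simp only [Prod.mk.injEq]
  exact ⟨by rw [e1], by rw [e2], by exact_mod_cast e3, by exact_mod_cast e4, by exact_mod_cast e5, by exact_mod_cast e6⟩

lemma P_eq (n : ℕ) (hn : 1 ≤ n) : P n = (Wt n).ncard := by
  unfold P
  rw [Nat.card_congr (E n), Nat.card_coe_set_eq,
    ← Set.ncard_image_of_injOn (conv_injOn n hn), conv_range n hn]



end TMPal

theorem thueMorse_P_palindromes (q i : ℕ) (hq : 1 ≤ q) (hi : i ≤ 2 ^ (q - 1)) :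
    P (2 ^ q + 1 + i) = P (2 ^ (q + 1) + 1 - i) := by
  have hle : 2^(q-1) ≤ 2^(q+1) := Nat.pow_le_pow_right (by norm_num) (by omega)
  rw [TMPal.P_eq _ (by omega), TMPal.P_eq _ (by omega),
      TMPal.pal q hq i hi, Set.ncard_image_of_injective _ (TMPal.rho_inj _)]
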